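/- If s_1, …, s_m ∈ H_1(K_b) have cosets modulo im(φ_{b−1}) that are linearly independent in H_1(K_b)/im(φ_{b−1}) and each s_i has persistence interval (b, d_i) in H_1(K_•) (with d_i ∈ {b+1,…,n} ∪ {∞}), then the images θ_{1,b}(s_1), …, θ_{1,b}(s_m) have cosets modulo im(ψ_{b−1}) that are linearly independent in H_1(K̃_b)/im(ψ_{b−1}) and each θ_{1,b}(s_i) has persistence interval (b, d_i) in H_1(K̃_•); hence the 1st persistence barcode of K_• is contained as a multiset in the 1st persistence barcode of K̃_•. Moreover, for every q > 1 and every i ∈ {1,…,n}, the map θ_{q,i} : H_q(K_i) → H_q(K̃_i) is an isomorphism commuting with the connecting maps, so for q > 1 the q-th persistence barcodes of K_• and K̃_• coincide. -/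

import Mathlib

/-- An abstract simplicial complex on a vertex type `α`: a collection of nonempty
finite subsets of `α` closed under passing to nonempty subsets. -/
structure AbsSC (α : Type) where
  faces : Set (Finset α)
  not_empty_mem : ∅ ∉ faces
  down_closed : ∀ {s t : Finset α}, s ∈ faces → t ⊆ s → t.Nonempty → t ∈ faces

namespace AbsSC

variable {α : Type}

/-- The vertex set of an abstract simplicial complex. -/
def vertexSet (K : AbsSC α) : Set α := {v | {v} ∈ K.faces}

/-- The type of `q`-simplices (faces with `q+1` vertices). -/
def simplices (K : AbsSC α) (q : ℕ) : Type :=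
  {s : Finset α // s ∈ K.faces ∧ s.card = q + 1}

/-- The space of `q`-chains over `ℤ/2`: formal sums of `q`-simplices. -/
abbrev Chain (K : AbsSC α) (q : ℕ) : Type := K.simplices q →₀ ZMod 2

/-- The sum of the `q`-dimensional faces of a `(q+1)`-simplex. -/
noncomputable def faceChain (K : AbsSC α) (q : ℕ) (s : K.simplices (q + 1)) : K.Chain q :=
  ∑ t ∈ (s.1.powersetCard (q + 1)).attach,
    Finsupp.single
      ⟨t.1, by
        obtain ⟨hsub, hcard⟩ := Finset.mem_powersetCard.mp t.2
        refine ⟨K.down_closed s.2.1 hsub ?_, hcard⟩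
        rw [← Finset.card_pos, hcard]
        omega⟩
      (1 : ZMod 2)

/-- The boundary map `∂_{q+1} : C_{q+1}(K) → C_q(K)`, sending each `(q+1)`-simplex to
the sum of its `q`-dimensional faces. -/
noncomputable def boundary (K : AbsSC α) (q : ℕ) :
    K.Chain (q + 1) →ₗ[ZMod 2] K.Chain q :=
  Finsupp.lsum (ZMod 2) fun s => LinearMap.toSpanSingleton (ZMod 2) (K.Chain q) (K.faceChain q s)

/-- The cycle subspace: `ker ∂_q` (all of `C_0` in degree `0`). -/
noncomputable def cycles (K : AbsSC α) : (q : ℕ) → Submodule (ZMod 2) (K.Chain q)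
  | 0 => ⊤
  | q + 1 => LinearMap.ker (K.boundary q)

/-- The boundaries, viewed as a submodule of the cycles. -/
noncomputable def boundariesIn (K : AbsSC α) (q : ℕ) :
    Submodule (ZMod 2) (K.cycles q) :=
  Submodule.comap (K.cycles q).subtype (LinearMap.range (K.boundary q))

/-- The `q`-th simplicial homology over `ℤ/2`: `H_q(K) = ker ∂_q / im ∂_{q+1}`. -/
def Homology (K : AbsSC α) (q : ℕ) : Type :=
  (K.cycles q) ⧸ (K.boundariesIn q)

noncomputable instance (K : AbsSC α) (q : ℕ) : AddCommGroup (K.Homology q) :=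
  inferInstanceAs (AddCommGroup ((K.cycles q) ⧸ (K.boundariesIn q)))

noncomputable instance (K : AbsSC α) (q : ℕ) : Module (ZMod 2) (K.Homology q) :=
  inferInstanceAs (Module (ZMod 2) ((K.cycles q) ⧸ (K.boundariesIn q)))

/-- The homology class of a cycle. -/
noncomputable def hClass (K : AbsSC α) (q : ℕ) (c : K.Chain q) (hc : c ∈ K.cycles q) :
    K.Homology q :=
  Submodule.Quotient.mk ⟨c, hc⟩

/-- The chain map induced by an inclusion of simplicial complexes. -/
noncomputable def chainMap (K L : AbsSC α) (h : K.faces ⊆ L.faces) (q : ℕ) :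
    K.Chain q →ₗ[ZMod 2] L.Chain q :=
  Finsupp.lmapDomain (ZMod 2) (ZMod 2) fun s : K.simplices q =>
    (⟨s.1, h s.2.1, s.2.2⟩ : L.simplices q)

/-- `θ` is the map on `q`-th homology induced by the inclusion `K ⊆ L`: it sends the
class of every cycle `c` of `K` to the class of the image chain of `c` in `L`. -/
def InducedHom (K L : AbsSC α) (q : ℕ)
    (θ : K.Homology q →ₗ[ZMod 2] L.Homology q) : Prop :=
  ∃ h : K.faces ⊆ L.faces,
    ∀ (c : K.Chain q) (hc : c ∈ K.cycles q),
      ∃ hc' : chainMap K L h q c ∈ L.cycles q,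
        θ (K.hClass q c hc) = L.hClass q (chainMap K L h q c) hc'

end AbsSC

/-- The faces of the gluing stars `S = S_1 ⊔ ⋯ ⊔ S_k`: for each `j`, the vertex `{z j}`,
the vertices `{v}` for `v ∈ P j`, and the edges `{z j, v}` for `v ∈ P j`. -/
def starFaces {α : Type} [DecidableEq α] {k : ℕ} (P : Fin k → Set α) (z : Fin k → α) :
    Set (Finset α) :=
  {s | ∃ j : Fin k, s = {z j} ∨ ∃ v ∈ P j, s = {v} ∨ s = {z j, v}}

section Tower

variable {W : ℕ → Type} [∀ i, AddCommGroup (W i)] [∀ i, Module (ZMod 2) (W i)]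

/-- The composite `φ_{i,j} = φ_{j-1} ∘ ⋯ ∘ φ_i` of the connecting maps of a tower
(the identity when `i = j`). -/
noncomputable def comps (φ : ∀ i, W i →ₗ[ZMod 2] W (i + 1)) {i j : ℕ} (h : i ≤ j) :
    W i →ₗ[ZMod 2] W j :=
  Nat.leRecOn (C := fun m => W i →ₗ[ZMod 2] W m) h (fun {m} g => (φ m).comp g) LinearMap.id

/-- `s ∈ W b` has persistence interval `(b, d)` with finite death `d ∈ {b+1, …, n}`:
`s ∉ im φ_{b-1}`, `φ_{b,d'}(s) ∉ im φ_{b-1,d'}` for all `b ≤ d' < d`, and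
`φ_{b,d}(s) ∈ im φ_{b-1,d}`. -/
def HasPersIntervalFin (φ : ∀ i, W i →ₗ[ZMod 2] W (i + 1)) (n b d : ℕ) (s : W b) : Prop :=
  ∃ (_ : 1 ≤ b) (hbd : b < d) (_ : d ≤ n),
    s ∉ LinearMap.range (comps φ (Nat.sub_le b 1)) ∧
    (∀ (d' : ℕ) (hd' : b ≤ d'), d' < d →
      comps φ hd' s ∉ LinearMap.range (comps φ (Nat.le_trans (Nat.sub_le b 1) hd'))) ∧
    comps φ (Nat.le_of_lt hbd) s ∈
      LinearMap.range (comps φ (Nat.le_trans (Nat.sub_le b 1) (Nat.le_of_lt hbd)))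

/-- `s ∈ W b` has persistence interval `(b, ∞)`: `s ∉ im φ_{b-1}` and
`φ_{b,d'}(s) ∉ im φ_{b-1,d'}` for all `b ≤ d' ≤ n`. -/
def HasPersIntervalInf (φ : ∀ i, W i →ₗ[ZMod 2] W (i + 1)) (n b : ℕ) (s : W b) : Prop :=
  ∃ _ : 1 ≤ b,
    s ∉ LinearMap.range (comps φ (Nat.sub_le b 1)) ∧
    ∀ (d' : ℕ) (hd' : b ≤ d'), d' ≤ n →
      comps φ hd' s ∉ LinearMap.range (comps φ (Nat.le_trans (Nat.sub_le b 1) hd'))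

end Tower

namespace AbsSC

variable {α : Type}

/-- The map on simplices induced by an inclusion. -/
def smap (K L : AbsSC α) (h : K.faces ⊆ L.faces) (q : ℕ) :
    K.simplices q → L.simplices q :=
  fun s => ⟨s.1, h s.2.1, s.2.2⟩

lemma smap_injective (K L : AbsSC α) (h : K.faces ⊆ L.faces) (q : ℕ) :
    Function.Injective (smap K L h q) := by
  intro a b hab
  have h2 := congrArg Subtype.val hab
  exact Subtype.ext h2

lemma chainMap_eq (K L : AbsSC α) (h : K.faces ⊆ L.faces) (q : ℕ) (c : K.Chain q) :
    chainMap K L h q c = Finsupp.mapDomain (smap K L h q) c := rfl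

lemma chainMap_injective (K L : AbsSC α) (h : K.faces ⊆ L.faces) (q : ℕ) :
    Function.Injective (chainMap K L h q) := by
  intro a b hab
  rw [chainMap_eq, chainMap_eq] at hab
  exact Finsupp.mapDomain_injective (smap_injective K L h q) hab

lemma chainMap_chainMap (K L M : AbsSC α) (h1 : K.faces ⊆ L.faces) (h2 : L.faces ⊆ M.faces)
    (q : ℕ) (c : K.Chain q) :
    chainMap L M h2 q (chainMap K L h1 q c) = chainMap K M (h1.trans h2) q c := by
  rw [chainMap_eq, chainMap_eq, chainMap_eq, ← Finsupp.mapDomain_comp]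
  congr 1

lemma chainMap_self (K : AbsSC α) (h : K.faces ⊆ K.faces) (q : ℕ) (c : K.Chain q) :
    chainMap K K h q c = c := by
  rw [chainMap_eq]
  have : smap K K h q = id := by
    funext s; exact Subtype.ext rfl
  rw [this, Finsupp.mapDomain_id]

lemma chainMap_faceChain (K L : AbsSC α) (h : K.faces ⊆ L.faces) (q : ℕ)
    (s : K.simplices (q + 1)) :
    chainMap K L h q (K.faceChain q s) = L.faceChain q (smap K L h (q + 1) s) := by
  unfold faceChain
  rw [map_sum]
  exact Finset.sum_congr rfl fun t _ => by
    rw [chainMap_eq]; refine Finsupp.mapDomain_single.trans ?_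
    rfl

lemma boundary_single (K : AbsSC α) (q : ℕ) (s : K.simplices (q + 1)) (r : ZMod 2) :
    K.boundary q (Finsupp.single s r) = r • K.faceChain q s := by
  unfold boundary
  rw [Finsupp.lsum_single]
  rfl

lemma boundary_chainMap (K L : AbsSC α) (h : K.faces ⊆ L.faces) (q : ℕ) (c : K.Chain (q + 1)) :
    L.boundary q (chainMap K L h (q + 1) c) = chainMap K L h q (K.boundary q c) := by
  induction c using Finsupp.induction_linear with
  | zero => simp
  | add f g hf hg => simp [map_add, hf, hg]
  | single s r =>
    have h1 : chainMap K L h (q + 1) (Finsupp.single s r)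
        = Finsupp.single (smap K L h (q + 1) s) r := by
      rw [chainMap_eq, Finsupp.mapDomain_single]
    rw [h1, boundary_single, boundary_single, map_smul, chainMap_faceChain]

lemma mem_cycles_chainMap (K L : AbsSC α) (h : K.faces ⊆ L.faces) (q : ℕ)
    {c : K.Chain q} (hc : c ∈ K.cycles q) :
    chainMap K L h q c ∈ L.cycles q := by
  cases q with
  | zero => trivial
  | succ q =>
    have hc' : K.boundary q c = 0 := hc
    show L.boundary q _ = 0
    rw [boundary_chainMap, hc', map_zero]

lemma homology_rep (K : AbsSC α) (q : ℕ) (y : K.Homology q) :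
    ∃ (c : K.Chain q) (hc : c ∈ K.cycles q), y = K.hClass q c hc := by
  obtain ⟨⟨c, hc⟩, hy⟩ := Submodule.Quotient.mk_surjective (K.boundariesIn q)
    (y : (K.cycles q) ⧸ (K.boundariesIn q))
  exact ⟨c, hc, hy.symm⟩

lemma hClass_eq_iff (K : AbsSC α) (q : ℕ) (c c' : K.Chain q) (hc : c ∈ K.cycles q)
    (hc' : c' ∈ K.cycles q) :
    K.hClass q c hc = K.hClass q c' hc' ↔ c - c' ∈ LinearMap.range (K.boundary q) := by
  unfold hClass
  refine (Submodule.Quotient.eq (K.boundariesIn q)).trans ?_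
  simp [boundariesIn, Submodule.mem_comap]

lemma hClass_zero (K : AbsSC α) (q : ℕ) (h : (0 : K.Chain q) ∈ K.cycles q) :
    K.hClass q 0 h = 0 := rfl

lemma hClass_eq_zero_iff (K : AbsSC α) (q : ℕ) (c : K.Chain q) (hc : c ∈ K.cycles q) :
    K.hClass q c hc = 0 ↔ c ∈ LinearMap.range (K.boundary q) := by
  rw [← hClass_zero K q (Submodule.zero_mem _), hClass_eq_iff, sub_zero]

lemma apply_induced {K L : AbsSC α} {q : ℕ} {θ : K.Homology q →ₗ[ZMod 2] L.Homology q}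
    (hind : InducedHom K L q θ) (hKL : K.faces ⊆ L.faces)
    (c : K.Chain q) (hc : c ∈ K.cycles q) :
    θ (K.hClass q c hc) = L.hClass q (chainMap K L hKL q c)
      (mem_cycles_chainMap K L hKL q hc) := by
  obtain ⟨h, hf⟩ := hind
  obtain ⟨hc'', e⟩ := hf c hc
  exact e

lemma chainMap_surjective (K L : AbsSC α) (h : K.faces ⊆ L.faces) (q : ℕ)
    (hall : ∀ s : L.simplices q, s.1 ∈ K.faces) :
    Function.Surjective (chainMap K L h q) := by
  intro c'
  refine ⟨Finsupp.mapDomain (fun s : L.simplices q => (⟨s.1, hall s, s.2.2⟩ : K.simplices q)) c', ?_⟩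
  rw [chainMap_eq]; refine Finsupp.mapDomain_comp.symm.trans ?_
  have : (smap K L h q ∘ fun s : L.simplices q => (⟨s.1, hall s, s.2.2⟩ : K.simplices q)) = id := by
    funext s; exact Subtype.ext rfl
  rw [this, Finsupp.mapDomain_id]

lemma chainMap_mem_range (K L : AbsSC α) (h : K.faces ⊆ L.faces) (q : ℕ)
    (c' : L.Chain q) (hsupp : ∀ s ∈ c'.support, (s : L.simplices q).1 ∈ K.faces) :
    ∃ c : K.Chain q, chainMap K L h q c = c' := by
  have hr : ↑c'.support ⊆ Set.range (smap K L h q) := by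
    intro s hs
    exact ⟨⟨s.1, hsupp s hs, s.2.2⟩, Subtype.ext rfl⟩
  refine ⟨Finsupp.comapDomain _ c' ((smap_injective K L h q).injOn), ?_⟩
  rw [chainMap_eq]
  exact Finsupp.mapDomain_comapDomain _ (smap_injective K L h q) c' hr

end AbsSC
section TowerAux

variable {W W' : ℕ → Type} [∀ i, AddCommGroup (W i)] [∀ i, Module (ZMod 2) (W i)]
  [∀ i, AddCommGroup (W' i)] [∀ i, Module (ZMod 2) (W' i)]

lemma comps_self (φ : ∀ i, W i →ₗ[ZMod 2] W (i + 1)) {i : ℕ} (h : i ≤ i) :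
    comps φ h = LinearMap.id := by
  unfold comps; exact Nat.leRecOn_self _

lemma comps_succ (φ : ∀ i, W i →ₗ[ZMod 2] W (i + 1)) {i j : ℕ} (hij : i ≤ j)
    (h : i ≤ j + 1) :
    comps φ h = (φ j).comp (comps φ hij) := by
  unfold comps; exact Nat.leRecOn_succ hij _

lemma theta_comps_comm (n : ℕ)
    (φ : ∀ i, W i →ₗ[ZMod 2] W (i + 1)) (ψ : ∀ i, W' i →ₗ[ZMod 2] W' (i + 1))
    (θ : ∀ i, W i →ₗ[ZMod 2] W' i)
    (hsq : ∀ i, i < n → (θ (i + 1)).comp (φ i) = (ψ i).comp (θ i))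
    {i j : ℕ} (hij : i ≤ j) (hjn : j ≤ n) (x : W i) :
    θ j (comps φ hij x) = comps ψ hij (θ i x) := by
  induction j, hij using Nat.le_induction with
  | base => rw [comps_self, comps_self]; rfl
  | succ j hij ih =>
    rw [comps_succ φ hij, comps_succ ψ hij]
    have h1 := ih (by omega)
    have h2 := congrFun (congrArg DFunLike.coe (hsq j (by omega))) (comps φ hij x)
    simp only [LinearMap.comp_apply] at h1 h2 ⊢
    rw [h2, h1]

end TowerAux
section ComplexTower

open AbsSC

variable {α : Type}

lemma faces_mono (K : ℕ → AbsSC α) (n : ℕ)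
    (hKmono : ∀ i, i < n → (K i).faces ⊆ (K (i + 1)).faces)
    {i j : ℕ} (hij : i ≤ j) (hjn : j ≤ n) : (K i).faces ⊆ (K j).faces := by
  induction j, hij using Nat.le_induction with
  | base => exact subset_rfl
  | succ j hij ih => exact (ih (by omega)).trans (hKmono j (by omega))

lemma comps_hClass (K : ℕ → AbsSC α) (n : ℕ)
    (hKmono : ∀ i, i < n → (K i).faces ⊆ (K (i + 1)).faces)
    (φ : ∀ i, (K i).Homology 1 →ₗ[ZMod 2] (K (i + 1)).Homology 1)
    (hφ : ∀ i, i < n → InducedHom (K i) (K (i + 1)) 1 (φ i))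
    {i j : ℕ} (hij : i ≤ j) (hjn : j ≤ n) (c : (K i).Chain 1) (hc : c ∈ (K i).cycles 1) :
    comps φ hij ((K i).hClass 1 c hc)
      = (K j).hClass 1 (chainMap (K i) (K j) (faces_mono K n hKmono hij hjn) 1 c)
        (mem_cycles_chainMap _ _ _ 1 hc) := by
  induction j, hij using Nat.le_induction with
  | base =>
    rw [comps_self]
    have hch := chainMap_self (K i) (faces_mono K n hKmono le_rfl hjn) 1 c
    simp only [LinearMap.id_apply]
    unfold hClass
    congr 1
    exact Subtype.ext hch.symm
  | succ j hij ih =>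
    rw [comps_succ φ hij, LinearMap.comp_apply, ih (by omega)]
    rw [apply_induced (hφ j (by omega)) (hKmono j (by omega))]
    unfold hClass
    congr 1
    exact Subtype.ext (chainMap_chainMap _ _ _ _ _ 1 c)

end ComplexTower
section StarAux

open AbsSC

variable {α : Type} [DecidableEq α]
set_option linter.unusedSectionVars false

lemma starFaces_card_le {k : ℕ} (P : Fin k → Set α) (z : Fin k → α) {s : Finset α}
    (hs : s ∈ starFaces P z) : s.card ≤ 2 := by
  obtain ⟨j, hj | ⟨v, hv, hj | hj⟩⟩ := hs
  · simp [hj]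
  · simp [hj]
  · subst hj
    exact (Finset.card_insert_le _ _).trans (by simp)

lemma not_face_of_z {K : AbsSC α} {z : α} (hz : z ∉ K.vertexSet) {s : Finset α}
    (hzs : z ∈ s) (hsf : s ∈ K.faces) : False :=
  hz (K.down_closed hsf (Finset.singleton_subset_iff.mpr hzs) (Finset.singleton_nonempty z))

lemma Kt_simplex_mem {k : ℕ} {P : Fin k → Set α} {z : Fin k → α} {K Kt : AbsSC α}
    (hfaces : Kt.faces = K.faces ∪ starFaces P z) {q : ℕ} (hq : 2 ≤ q)
    (s : Kt.simplices q) : s.1 ∈ K.faces := by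
  have h3 : s.1 ∈ K.faces ∪ starFaces P z := by
    rw [← hfaces]; exact s.2.1
  rcases h3 with h | h
  · exact h
  · have h1 := starFaces_card_le P z h
    have h2 := s.2.2
    omega

lemma theta_inj (K Kt : AbsSC α) (h : K.faces ⊆ Kt.faces) (q : ℕ)
    (hhigh : ∀ s : Kt.simplices (q + 2), s.1 ∈ K.faces)
    (θ : K.Homology (q + 1) →ₗ[ZMod 2] Kt.Homology (q + 1))
    (hind : InducedHom K Kt (q + 1) θ) : Function.Injective θ := by
  rw [injective_iff_map_eq_zero]
  intro x hx
  obtain ⟨c, hc, rfl⟩ := homology_rep K (q + 1) x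
  rw [apply_induced hind h, hClass_eq_zero_iff] at hx
  obtain ⟨f, hf⟩ := hx
  obtain ⟨g, rfl⟩ := chainMap_surjective K Kt h (q + 2) hhigh f
  rw [boundary_chainMap] at hf
  have hgc : K.boundary (q + 1) g = c := chainMap_injective K Kt h (q + 1) hf
  exact (hClass_eq_zero_iff K (q + 1) c hc).mpr ⟨g, hgc⟩

lemma theta_surj (K Kt : AbsSC α) (h : K.faces ⊆ Kt.faces) (q : ℕ)
    (hall : ∀ s : Kt.simplices (q + 2), s.1 ∈ K.faces)
    (θ : K.Homology (q + 2) →ₗ[ZMod 2] Kt.Homology (q + 2))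
    (hind : InducedHom K Kt (q + 2) θ) : Function.Surjective θ := by
  intro y
  obtain ⟨c', hc', rfl⟩ := homology_rep Kt (q + 2) y
  obtain ⟨c, rfl⟩ := chainMap_surjective K Kt h (q + 2) hall c'
  have hcyc : c ∈ K.cycles (q + 2) := by
    have h0 : Kt.boundary (q + 1) (chainMap K Kt h (q + 2) c) = 0 := hc'
    rw [boundary_chainMap] at h0
    have : K.boundary (q + 1) c = 0 := by
      apply chainMap_injective K Kt h (q + 1)
      rw [h0, map_zero]
    exact this
  exact ⟨K.hClass (q + 2) c hcyc, apply_induced hind h c hcyc⟩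

end StarAux

/-- if `s 0, …, s (m-1) ∈ H_1(K_b)` have linearly independent cosets
modulo `im φ_{b-1}` and each `s i` has persistence interval `(b, dd i)` in `H_1(K_•)`
(with `dd i ∈ {b+1, …, n} ∪ {∞}`), then the images `θ_{1,b}(s i)` have linearly
independent cosets modulo `im ψ_{b-1}` and each `θ_{1,b}(s i)` has persistence
interval `(b, dd i)` in `H_1(K̃_•)` (hence the 1st persistence barcode of `K_•` is
contained as a multiset in that of `K̃_•`); moreover, for every `q > 1` and every
`i ∈ {1, …, n}`, the map `θ_{q,i} : H_q(K_i) → H_q(K̃_i)` is an isomorphism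
(commuting with the connecting maps, by `hsq`), so for `q > 1` the `q`-th persistence
barcodes of `K_•` and `K̃_•` coincide. -/
theorem stmt15 {α : Type} [DecidableEq α] (n k : ℕ)
    (K Kt : ℕ → AbsSC α)
    (hK0 : (K 0).faces = ∅)
    (hKt0 : (Kt 0).faces = ∅)
    (hKmono : ∀ i, i < n → (K i).faces ⊆ (K (i + 1)).faces)
    (hKtmono : ∀ i, i < n → (Kt i).faces ⊆ (Kt (i + 1)).faces)
    (P : Fin k → Set α)
    (hPne : ∀ j, (P j).Nonempty)
    (hPdisj : Pairwise (Function.onFun Disjoint P))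
    (hPunion : (⋃ j, P j) = (K 1).vertexSet)
    (z : Fin k → α)
    (hzinj : Function.Injective z)
    (hznew : ∀ (j : Fin k) (i : ℕ), i ≤ n → z j ∉ (K i).vertexSet)
    (hKt : ∀ i, 1 ≤ i → i ≤ n → (Kt i).faces = (K i).faces ∪ starFaces P z)
    (φ : ∀ (q i : ℕ), (K i).Homology q →ₗ[ZMod 2] (K (i + 1)).Homology q)
    (ψ : ∀ (q i : ℕ), (Kt i).Homology q →ₗ[ZMod 2] (Kt (i + 1)).Homology q)
    (θ : ∀ (q i : ℕ), (K i).Homology q →ₗ[ZMod 2] (Kt i).Homology q)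
    (hφ : ∀ q i, i < n → AbsSC.InducedHom (K i) (K (i + 1)) q (φ q i))
    (hψ : ∀ q i, i < n → AbsSC.InducedHom (Kt i) (Kt (i + 1)) q (ψ q i))
    (hθ : ∀ q i, i ≤ n → AbsSC.InducedHom (K i) (Kt i) q (θ q i))
    (hsq : ∀ q i, i < n → (θ q (i + 1)).comp (φ q i) = (ψ q i).comp (θ q i))
    (b : ℕ) (hb1 : 1 ≤ b) (hbn : b ≤ n)
    (m : ℕ)
    (s : Fin m → (K b).Homology 1)
    (dd : Fin m → ℕ∞)
    (hdd : ∀ i, dd i = ⊤ ∨ ∃ di : ℕ, dd i = (di : ℕ∞) ∧ b < di ∧ di ≤ n)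
    (hsindep : LinearIndependent (ZMod 2)
      (fun i : Fin m =>
        Submodule.Quotient.mk (p := LinearMap.range (comps (φ 1) (Nat.sub_le b 1))) (s i)))
    (hsfin : ∀ (i : Fin m) (di : ℕ), dd i = (di : ℕ∞) →
      HasPersIntervalFin (φ 1) n b di (s i))
    (hsinf : ∀ i : Fin m, dd i = ⊤ → HasPersIntervalInf (φ 1) n b (s i)) :
    (LinearIndependent (ZMod 2)
      (fun i : Fin m =>
        Submodule.Quotient.mk (p := LinearMap.range (comps (ψ 1) (Nat.sub_le b 1)))
          (θ 1 b (s i)))) ∧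
    (∀ (i : Fin m) (di : ℕ), dd i = (di : ℕ∞) →
      HasPersIntervalFin (ψ 1) n b di (θ 1 b (s i))) ∧
    (∀ i : Fin m, dd i = ⊤ → HasPersIntervalInf (ψ 1) n b (θ 1 b (s i))) ∧
    (∀ q : ℕ, 1 < q → ∀ i : ℕ, 1 ≤ i → i ≤ n → Function.Bijective (θ q i)) := by
  classical
  have hn1 : 1 ≤ n := le_trans hb1 hbn
  -- inclusion of K i into Kt i, for all i ≤ n
  have hsubA : ∀ i, i ≤ n → (K i).faces ⊆ (Kt i).faces := by
    intro i hin
    rcases Nat.eq_zero_or_pos i with h0 | h1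
    · subst h0; rw [hK0]; exact Set.empty_subset _
    · rw [hKt i h1 hin]; exact Set.subset_union_left
  -- simplices of Kt of dimension ≥ 1 (card ≥ 3) come from K
  have hhigh : ∀ (i : ℕ), 1 ≤ i → i ≤ n → ∀ (q : ℕ), 2 ≤ q →
      ∀ s : (Kt i).simplices q, s.1 ∈ (K i).faces := by
    intro i h1 h2 q hq s
    exact Kt_simplex_mem (hKt i h1 h2) hq s
  -- injectivity of θ (q+1) i
  have θinj : ∀ (q i : ℕ), 1 ≤ i → i ≤ n → Function.Injective (θ (q + 1) i) := by
    intro q i h1 h2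
    exact theta_inj (K i) (Kt i) (hsubA i h2) q
      (fun s => hhigh i h1 h2 (q + 2) (by omega) s) (θ (q + 1) i) (hθ (q + 1) i h2)
  -- the key lemma: classes of K j whose θ-image comes from level i already come from level i
  have main : ∀ (i j : ℕ) (hij : i ≤ j), 1 ≤ j → j ≤ n →
      ∀ x : (K j).Homology 1,
        θ 1 j x ∈ LinearMap.range (comps (ψ 1) hij) →
        x ∈ LinearMap.range (comps (φ 1) hij) := by
    intro i j hij hj1 hjn x hx
    have hin : i ≤ n := le_trans hij hjn
    obtain ⟨y, hy⟩ := hx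
    obtain ⟨c, hc, rfl⟩ := AbsSC.homology_rep (Kt i) 1 y
    obtain ⟨cx, hcx, rfl⟩ := AbsSC.homology_rep (K j) 1 x
    have hy' := hy
    rw [comps_hClass Kt n hKtmono (ψ 1) (fun i' h => hψ 1 i' h) hij hjn c hc,
      AbsSC.apply_induced (hθ 1 j hjn) (hsubA j hjn),
      AbsSC.hClass_eq_iff] at hy'
    obtain ⟨f, hf⟩ := hy'
    obtain ⟨g, rfl⟩ := AbsSC.chainMap_surjective (K j) (Kt j) (hsubA j hjn) 2
      (fun s => hhigh j hj1 hjn 2 le_rfl s) f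
    rw [AbsSC.boundary_chainMap] at hf
    have hA : AbsSC.chainMap (Kt i) (Kt j) (faces_mono Kt n hKtmono hij hjn) 1 c
        = AbsSC.chainMap (K j) (Kt j) (hsubA j hjn) 1 ((K j).boundary 1 g + cx) := by
      rw [map_add]
      exact sub_eq_iff_eq_add.mp hf.symm
    -- every edge in the support of c is an edge of K i
    have hallsupp : ∀ s ∈ c.support, (s : (Kt i).simplices 1).1 ∈ (K i).faces := by
      intro s hs
      by_contra hnot
      rcases Nat.eq_zero_or_pos i with h0 | h1i
      · subst h0
        have hemp : ∀ u : Finset α, u ∈ (Kt 0).faces → False := by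
          rw [hKt0]; simp
        exact hemp _ s.2.1
      · have hm : s.1 ∈ (K i).faces ∪ starFaces P z := by
          rw [← hKt i h1i hin]; exact s.2.1
        rcases hm with h | h
        · exact hnot h
        · -- the edge contains some z j0
          have hzj : ∃ j0 : Fin k, z j0 ∈ s.1 := by
            obtain ⟨j0, hj0 | ⟨v, hv, hj0 | hj0⟩⟩ := h
            · exact ⟨j0, by rw [hj0]; exact Finset.mem_singleton_self _⟩
            · exfalso
              apply hnot
              have hv1 : v ∈ (K 1).vertexSet := by
                rw [← hPunion]; exact Set.mem_iUnion.mpr ⟨j0, hv⟩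
              have : ({v} : Finset α) ∈ (K 1).faces := hv1
              rw [hj0]
              exact faces_mono K n hKmono h1i hin this
            · exact ⟨j0, by rw [hj0]; exact Finset.mem_insert_self _ _⟩
          obtain ⟨j0, hzj0⟩ := hzj
          -- the coefficient of s in c must vanish
          have e1 : (AbsSC.chainMap (Kt i) (Kt j) (faces_mono Kt n hKtmono hij hjn) 1 c)
              (AbsSC.smap (Kt i) (Kt j) (faces_mono Kt n hKtmono hij hjn) 1 s) = c s := by
            rw [AbsSC.chainMap_eq]
            exact Finsupp.mapDomain_apply (AbsSC.smap_injective _ _ _ 1) c s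
          have e2 : (AbsSC.chainMap (K j) (Kt j) (hsubA j hjn) 1 ((K j).boundary 1 g + cx))
              (AbsSC.smap (Kt i) (Kt j) (faces_mono Kt n hKtmono hij hjn) 1 s) = 0 := by
            rw [AbsSC.chainMap_eq]
            apply Finsupp.mapDomain_notin_range
            rintro ⟨t, ht⟩
            have htf : t.1 ∈ (K j).faces := t.2.1
            have hts : t.1 = s.1 := congrArg Subtype.val ht
            rw [hts] at htf
            exact not_face_of_z (hznew j0 j hjn) hzj0 htf
          rw [hA, e2] at e1
          exact Finsupp.mem_support_iff.mp hs e1.symm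
    obtain ⟨a, ha⟩ := AbsSC.chainMap_mem_range (K i) (Kt i) (hsubA i hin) 1 c hallsupp
    have hacyc : a ∈ (K i).cycles 1 := by
      have hc0 : (Kt i).boundary 0 c = 0 := hc
      show (K i).boundary 0 a = 0
      apply AbsSC.chainMap_injective (K i) (Kt i) (hsubA i hin) 0
      rw [← AbsSC.boundary_chainMap, ha, map_zero, hc0]
    have hθa : θ 1 i ((K i).hClass 1 a hacyc) = (Kt i).hClass 1 c hc := by
      rw [AbsSC.apply_induced (hθ 1 i hin) (hsubA i hin)]
      unfold AbsSC.hClass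
      congr 1
      exact Subtype.ext ha
    refine ⟨(K i).hClass 1 a hacyc, θinj 0 j hj1 hjn ?_⟩
    rw [theta_comps_comm n (φ 1) (ψ 1) (θ 1) (fun i' hi' => hsq 1 i' hi') hij hjn, hθa, hy]
  refine ⟨?_, ?_, ?_, ?_⟩
  · -- linear independence
    rw [Fintype.linearIndependent_iff] at hsindep ⊢
    intro g hg
    set p := LinearMap.range (comps (ψ 1) (Nat.sub_le b 1)) with hp
    have hmk : ∀ (u : (K b).Homology 1),
        Submodule.Quotient.mk (p := p) (θ 1 b u) = (p.mkQ.comp (θ 1 b)) u := fun u => rfl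
    have hsum : Submodule.Quotient.mk (p := p) (θ 1 b (∑ i, g i • s i)) = 0 := by
      rw [hmk, map_sum]
      simp only [map_smul]
      rw [← hg]
      rfl
    rw [Submodule.Quotient.mk_eq_zero] at hsum
    have hmem := main (b - 1) b (Nat.sub_le b 1) hb1 hbn (∑ i, g i • s i) hsum
    apply hsindep g
    have : Submodule.Quotient.mk (p := LinearMap.range (comps (φ 1) (Nat.sub_le b 1)))
        (∑ i, g i • s i) = 0 := (Submodule.Quotient.mk_eq_zero _).mpr hmem
    rw [← this]
    simp only [← Submodule.mkQ_apply, ← map_smul, ← map_sum]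
  · -- finite intervals
    intro i di hdi
    obtain ⟨h1, hbd, hdn, hbirth, hmid, hdeath⟩ := hsfin i di hdi
    refine ⟨h1, hbd, hdn, ?_, ?_, ?_⟩
    · intro hmem
      exact hbirth (main (b - 1) b (Nat.sub_le b 1) hb1 hbn (s i) hmem)
    · intro d' hd' hlt hmem
      have hd'n : d' ≤ n := by omega
      rw [← theta_comps_comm n (φ 1) (ψ 1) (θ 1) (fun i' hi' => hsq 1 i' hi') hd' hd'n (s i)] at hmem
      exact hmid d' hd' hlt (main (b - 1) d' (le_trans (Nat.sub_le b 1) hd') (le_trans hb1 hd') hd'n _ hmem)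
    · obtain ⟨w, hw⟩ := hdeath
      refine ⟨θ 1 (b - 1) w, ?_⟩
      rw [← theta_comps_comm n (φ 1) (ψ 1) (θ 1) (fun i' hi' => hsq 1 i' hi') _ hdn,
        hw, theta_comps_comm n (φ 1) (ψ 1) (θ 1) (fun i' hi' => hsq 1 i' hi') _ hdn]
  · -- infinite intervals
    intro i hdi
    obtain ⟨h1, hbirth, hmid⟩ := hsinf i hdi
    refine ⟨h1, ?_, ?_⟩
    · intro hmem
      exact hbirth (main (b - 1) b (Nat.sub_le b 1) hb1 hbn (s i) hmem)
    · intro d' hd' hd'n hmem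
      rw [← theta_comps_comm n (φ 1) (ψ 1) (θ 1) (fun i' hi' => hsq 1 i' hi') hd' hd'n (s i)] at hmem
      exact hmid d' hd' hd'n (main (b - 1) d' (le_trans (Nat.sub_le b 1) hd') (le_trans hb1 hd') hd'n _ hmem)
  · -- bijectivity in degrees > 1
    intro q hq i h1 h2
    obtain ⟨r, rfl⟩ : ∃ r, q = r + 2 := ⟨q - 2, by omega⟩
    constructor
    · exact theta_inj (K i) (Kt i) (hsubA i h2) (r + 1)
        (fun s => hhigh i h1 h2 (r + 3) (by omega) s) (θ (r + 2) i) (hθ (r + 2) i h2)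
    · exact theta_surj (K i) (Kt i) (hsubA i h2) r
        (fun s => hhigh i h1 h2 (r + 2) (by omega) s) (θ (r + 2) i) (hθ (r + 2) i h2)
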